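/- arXiv:1001.4683 — 2 statements merged into one kernel-verified Lean document; each statement's English description precedes it below -/
import Mathlib

section
/- Let {C̃, C̃₁} be a dual Mannheim pair with constant offset λ̃ ≠ 0. If t̃ = cos θ̃ t̃₁ + sin θ̃ ñ₁ with dual angle θ̃, then cos θ̃ = ds̃₁/ds̃, sin θ̃ = −λ̃τ̃₁ ds̃₁/ds̃, cos θ̃ = (1 + λ̃κ̃) ds̃/ds̃₁, sin θ̃ = λ̃τ̃ ds̃/ds̃₁, and consequently the torsion of C̃₁ satisfies τ̃₁ = κ̃/(λ̃τ̃). -/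
open TrivSqZeroExt DualNumber

/-- The dual space `D³`. -/
abbrev D3 : Type := Fin 3 → DualNumber ℝ

/-- The dual scalar product on `D³`. -/
noncomputable def dualDot (v w : D3) : DualNumber ℝ := ∑ i, v i * w i

lemma dualDot_comm (v w : D3) : dualDot v w = dualDot w v := by
  simp [dualDot, mul_comm]

lemma dualDot_add_left (v w u : D3) : dualDot (v + w) u = dualDot v u + dualDot w u := by
  simp [dualDot, add_mul, Finset.sum_add_distrib]

lemma dualDot_smul_left (c : DualNumber ℝ) (v u : D3) :
    dualDot (c • v) u = c * dualDot v u := by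
  simp [dualDot, Finset.mul_sum, mul_assoc]

lemma dualDot_neg_left (v u : D3) : dualDot (-v) u = -dualDot v u := by
  simp [dualDot, Finset.sum_neg_distrib]

lemma hasDerivAt_dualDot {u v : ℝ → D3} {u' v' : D3} {x : ℝ}
    (hu : HasDerivAt u u' x) (hv : HasDerivAt v v' x) :
    HasDerivAt (fun s => dualDot (u s) (v s)) (dualDot u' (v x) + dualDot (u x) v') x := by
  simp only [dualDot]
  rw [← Finset.sum_add_distrib]
  exact HasDerivAt.fun_sum fun i _ => ((hasDerivAt_pi.mp hu) i).mul ((hasDerivAt_pi.mp hv) i)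

set_option maxHeartbeats 2000000 in
set_option synthInstance.maxHeartbeats 1000000 in
/-- For a dual Mannheim pair `{C̃, C̃₁}` with constant offset `λ̃ ≠ 0` and
`t̃ = cos θ̃ t̃₁ + sin θ̃ ñ₁`: `cos θ̃ = ds̃₁/ds̃`, `sin θ̃ = −λ̃τ̃₁ ds̃₁/ds̃`,
`cos θ̃ = (1 + λ̃κ̃) ds̃/ds̃₁`, `sin θ̃ = λ̃τ̃ ds̃/ds̃₁`, and `τ̃₁ = κ̃/(λ̃τ̃)`.
Both curves are parameterized by a common real parameter, `σ = ds̃/ds` and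
`σ₁ = ds̃₁/ds` being the dual speeds, so that e.g. `cos θ̃ = ds̃₁/ds̃` reads
`cos θ̃ · σ = σ₁`. -/
theorem dual_mannheim_torsion
    (α α₁ t n b t₁ n₁ b₁ : ℝ → D3)
    (κ τ κ₁ τ₁ σ σ₁ cosθ sinθ : ℝ → DualNumber ℝ) (lam : DualNumber ℝ)
    (hlam : lam ≠ 0)
    (hrel : ∀ s, α s = α₁ s + lam • b₁ s)
    (hα : ∀ s, HasDerivAt α (σ s • t s) s)
    (ht : ∀ s, HasDerivAt t (σ s • (κ s • n s)) s)
    (hn : ∀ s, HasDerivAt n (σ s • (-(κ s • t s) + τ s • b s)) s)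
    (hb : ∀ s, HasDerivAt b (σ s • (-(τ s • n s))) s)
    (hα₁ : ∀ s, HasDerivAt α₁ (σ₁ s • t₁ s) s)
    (ht₁ : ∀ s, HasDerivAt t₁ (σ₁ s • (κ₁ s • n₁ s)) s)
    (hn₁ : ∀ s, HasDerivAt n₁ (σ₁ s • (-(κ₁ s • t₁ s) + τ₁ s • b₁ s)) s)
    (hb₁ : ∀ s, HasDerivAt b₁ (σ₁ s • (-(τ₁ s • n₁ s))) s)
    (hnb₁ : ∀ s, n s = b₁ s)
    (hframe : ∀ s, t s = cosθ s • t₁ s + sinθ s • n₁ s)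
    (hframe' : ∀ s, b s = -(sinθ s • t₁ s) + cosθ s • n₁ s)
    (ht₁unit : ∀ s, dualDot (t₁ s) (t₁ s) = 1)
    (hn₁unit : ∀ s, dualDot (n₁ s) (n₁ s) = 1)
    (hb₁unit : ∀ s, dualDot (b₁ s) (b₁ s) = 1)
    (ht₁n₁ : ∀ s, dualDot (t₁ s) (n₁ s) = 0)
    (ht₁b₁ : ∀ s, dualDot (t₁ s) (b₁ s) = 0)
    (hn₁b₁ : ∀ s, dualDot (n₁ s) (b₁ s) = 0)
    (hσ : ∀ s, IsUnit (σ s)) (hσ₁ : ∀ s, IsUnit (σ₁ s))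
    (hτ : ∀ s, IsUnit (τ s)) :
    (∀ s, cosθ s * σ s = σ₁ s) ∧
    (∀ s, sinθ s * σ s = -(lam * τ₁ s * σ₁ s)) ∧
    (∀ s, cosθ s * σ₁ s = (1 + lam * κ s) * σ s) ∧
    (∀ s, sinθ s * σ₁ s = lam * τ s * σ s) ∧
    (∀ s, lam * τ s * τ₁ s = κ s) := by
  have hn₁t₁ : ∀ s, dualDot (n₁ s) (t₁ s) = 0 :=
    fun s => (dualDot_comm _ _).trans (ht₁n₁ s)
  have hcos : ∀ s, dualDot (t s) (t₁ s) = cosθ s := fun s => by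
    rw [hframe s]; simp [dualDot_add_left, dualDot_smul_left, ht₁unit, hn₁t₁]
  have hsin : ∀ s, dualDot (t s) (n₁ s) = sinθ s := fun s => by
    rw [hframe s]; simp [dualDot_add_left, dualDot_smul_left, ht₁n₁, hn₁unit]
  have hbt₁ : ∀ s, dualDot (b s) (t₁ s) = -(sinθ s) := fun s => by
    rw [hframe' s]
    simp [dualDot_add_left, dualDot_neg_left, dualDot_smul_left, ht₁unit, hn₁t₁]
  have hbn₁ : ∀ s, dualDot (b s) (n₁ s) = cosθ s := fun s => by
    rw [hframe' s]
    simp [dualDot_add_left, dualDot_neg_left, dualDot_smul_left, ht₁n₁, hn₁unit]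
  -- V1 : differentiate the Mannheim offset relation
  have V1 : ∀ s, σ s • t s = σ₁ s • t₁ s + lam • (σ₁ s • (-(τ₁ s • n₁ s))) := by
    intro s; funext i
    have h1 := (hasDerivAt_pi.mp (hα₁ s)) i
    have h2 := (hasDerivAt_pi.mp (hb₁ s)) i
    have h3 := (hasDerivAt_pi.mp (hα s)) i
    have hfun : (fun u => α u i) = fun u => α₁ u i + lam * b₁ u i := by
      funext u; rw [hrel u]; simp
    have h4 : HasDerivAt (fun u => α₁ u i + lam * b₁ u i) ((σ s • t s) i) s := hfun ▸ h3
    have h5 := h4.unique (h1.add (h2.const_mul lam))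
    simpa using h5
  -- V2 : the two expressions for the derivative of n = b₁
  have V2 : ∀ s, σ s • (-(κ s • t s) + τ s • b s) = σ₁ s • (-(τ₁ s • n₁ s)) := fun s => by
    have h : HasDerivAt n (σ₁ s • (-(τ₁ s • n₁ s))) s := by
      have := hb₁ s
      rwa [show b₁ = n from (funext hnb₁).symm] at this
    exact (hn s).unique h
  -- dotted forms of V1
  have e1 : ∀ s, cosθ s * σ s = σ₁ s := fun s => by
    have h := congrArg (fun v => dualDot v (t₁ s)) (V1 s)
    simp [dualDot_add_left, dualDot_smul_left, dualDot_neg_left, ht₁unit, hn₁t₁, hcos] at h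
    linear_combination h
  have e2 : ∀ s, sinθ s * σ s = -(lam * τ₁ s * σ₁ s) := fun s => by
    have h := congrArg (fun v => dualDot v (n₁ s)) (V1 s)
    simp [dualDot_add_left, dualDot_smul_left, dualDot_neg_left, ht₁n₁, hn₁unit, hsin] at h
    linear_combination h
  -- dotted forms of V2
  have eC : ∀ s, σ s * (κ s * cosθ s) + σ s * (τ s * sinθ s) = 0 := fun s => by
    have h := congrArg (fun v => dualDot v (t₁ s)) (V2 s)
    simp [dualDot_add_left, dualDot_smul_left, dualDot_neg_left, ht₁unit, hn₁t₁, hcos,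
      hbt₁] at h
    linear_combination -h
  have eD : ∀ s, σ s * (τ s * cosθ s) - σ s * (κ s * sinθ s) = -(σ₁ s * τ₁ s) := fun s => by
    have h := congrArg (fun v => dualDot v (n₁ s)) (V2 s)
    simp [dualDot_add_left, dualDot_smul_left, dualDot_neg_left, ht₁n₁, hn₁unit, hsin,
      hbn₁] at h
    linear_combination h
  -- V3 : differentiate b expressed in the frame of the second curve
  have eE : ∀ s, cosθ s * (σ₁ s * τ₁ s) = -(σ s * τ s) := by
    intro s
    have hfd := hasDerivAt_dualDot (ht s) (ht₁ s)
    have hgd := hasDerivAt_dualDot (ht s) (hn₁ s)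
    have hbfun : b = fun u => -((dualDot (t u) (n₁ u)) • t₁ u) +
        (dualDot (t u) (t₁ u)) • n₁ u := by
      funext u
      rw [hsin u, hcos u]
      exact hframe' u
    have hvec : σ s • (-(τ s • n s)) =
        -((dualDot (σ s • (κ s • n s)) (n₁ s) +
            dualDot (t s) (σ₁ s • (-(κ₁ s • t₁ s) + τ₁ s • b₁ s))) • t₁ s +
          (dualDot (t s) (n₁ s)) • (σ₁ s • (κ₁ s • n₁ s))) +
        ((dualDot (σ s • (κ s • n s)) (t₁ s) +
            dualDot (t s) (σ₁ s • (κ₁ s • n₁ s))) • n₁ s +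
          (dualDot (t s) (t₁ s)) • (σ₁ s • (-(κ₁ s • t₁ s) + τ₁ s • b₁ s))) := by
      refine funext fun i => ?_
      have hbi := (hasDerivAt_pi.mp (hb s)) i
      have hti := (hasDerivAt_pi.mp (ht₁ s)) i
      have hni := (hasDerivAt_pi.mp (hn₁ s)) i
      have hRHS := ((hgd.mul hti).neg).add (hfd.mul hni)
      have hfun : (fun u => b u i) =
          fun u => -(dualDot (t u) (n₁ u) * t₁ u i) + dualDot (t u) (t₁ u) * n₁ u i := by
        funext u; rw [hbfun]; simp
      have hbi' : HasDerivAt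
          (fun u => -(dualDot (t u) (n₁ u) * t₁ u i) + dualDot (t u) (t₁ u) * n₁ u i)
          ((σ s • (-(τ s • n s))) i) s := hfun ▸ hbi
      have h := hbi'.unique hRHS
      simpa [mul_add, add_mul, mul_assoc, mul_comm, mul_left_comm] using h
    have h := congrArg (fun v => dualDot v (b₁ s)) hvec
    have hnb : dualDot (n s) (b₁ s) = 1 := by rw [hnb₁ s]; exact hb₁unit s
    simp [dualDot_add_left, dualDot_neg_left, dualDot_smul_left, ht₁b₁, hn₁b₁, hb₁unit,
      hnb, hcos] at h
    linear_combination -h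
  refine ⟨e1, e2, fun s => ?_, fun s => ?_, fun s => ?_⟩
  · -- cosθ σ₁ = (1 + lam κ) σ
    have hD2 : σ₁ s * (κ s * lam * τ₁ s + τ s + τ₁ s) = σ₁ s * 0 := by
      linear_combination eD s + κ s * e2 s - τ s * e1 s
    have hsum0 : κ s * lam * τ₁ s + τ s + τ₁ s = 0 := (hσ₁ s).mul_left_cancel hD2
    have hττ₁ : τ s = τ₁ s * (-(1 + lam * κ s)) := by linear_combination hsum0
    have hτ₁u : IsUnit (τ₁ s) := isUnit_of_mul_isUnit_left (hττ₁ ▸ hτ s)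
    have h3 : τ₁ s * (cosθ s * σ₁ s) = τ₁ s * ((1 + lam * κ s) * σ s) := by
      linear_combination eE s - σ s * hττ₁
    exact hτ₁u.mul_left_cancel h3
  · -- sinθ σ₁ = lam τ σ
    linear_combination (-(sinθ s)) * e1 s + cosθ s * e2 s + (-lam) * eE s
  · -- lam τ τ₁ = κ
    have h5 : σ₁ s * (lam * τ s * τ₁ s) = σ₁ s * κ s := by
      linear_combination τ s * e2 s + κ s * e1 s - eC s
    exact (hσ₁ s).mul_left_cancel h5
end

section
/- Let {C̃, C̃₁} be a dual Mannheim pair with frames related by t̃₁ = cos θ̃ t̃ − sin θ̃ b̃ and ñ₁ = sin θ̃ t̃ + cos θ̃ b̃ (and ñ parallel to b̃₁). Then κ̃₁ = −dθ̃/ds̃₁, τ̃₁ = (sin θ̃ κ̃ − cos θ̃ τ̃) ds̃/ds̃₁, κ̃ = sin θ̃ τ̃₁ ds̃₁/ds̃, and τ̃ = −cos θ̃ τ̃₁ ds̃₁/ds̃. -/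
open TrivSqZeroExt DualNumber

/-- The sine and cosine of a dual number, via the Taylor extension. -/
noncomputable def dualSin (z : DualNumber ℝ) : DualNumber ℝ :=
  inl (Real.sin z.fst) + inl (z.snd * Real.cos z.fst) * ε

noncomputable def dualCos (z : DualNumber ℝ) : DualNumber ℝ :=
  inl (Real.cos z.fst) - inl (z.snd * Real.sin z.fst) * ε

lemma dualSin_sq_add_dualCos_sq (z : DualNumber ℝ) :
    dualSin z ^ 2 + dualCos z ^ 2 = 1 := by
  unfold dualSin dualCos
  ext
  · simp only [pow_two, fst_add, fst_sub, fst_mul, fst_inl, fst_one, DualNumber.fst_eps,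
      mul_zero, add_zero, sub_zero, zero_mul]
    linear_combination Real.sin_sq_add_cos_sq z.fst
  · simp only [pow_two, snd_add, snd_sub, DualNumber.snd_mul, snd_inl, snd_one, fst_add, fst_sub,
      fst_mul, fst_inl, DualNumber.fst_eps, DualNumber.snd_eps, mul_zero, add_zero,
      sub_zero, zero_mul, smul_zero, zero_add, mul_one]
    ring

lemma hasDerivAt_dualSin_comp {θ : ℝ → DualNumber ℝ} {θ' : DualNumber ℝ} {s : ℝ}
    (h : HasDerivAt θ θ' s) :
    HasDerivAt (fun u => dualSin (θ u)) (θ' * dualCos (θ s)) s := by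
  have hfst : HasDerivAt (fun u => (θ u).fst) θ'.fst s :=
    (fstCLM ℝ ℝ).hasFDerivAt.comp_hasDerivAt s h
  have hsnd : HasDerivAt (fun u => (θ u).snd) θ'.snd s :=
    (sndCLM ℝ ℝ).hasFDerivAt.comp_hasDerivAt s h
  have h1 : HasDerivAt (fun u => Real.sin ((θ u).fst)) (Real.cos ((θ s).fst) * θ'.fst) s :=
    (Real.hasDerivAt_sin _).comp s hfst
  have h2 : HasDerivAt (fun u => Real.cos ((θ u).fst)) (-Real.sin ((θ s).fst) * θ'.fst) s :=
    (Real.hasDerivAt_cos _).comp s hfst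
  have h3 := hsnd.mul h2
  have h4 : HasDerivAt (fun u => (inl (Real.sin ((θ u).fst)) : DualNumber ℝ))
      (inl (Real.cos ((θ s).fst) * θ'.fst)) s :=
    (inlCLM ℝ ℝ).hasFDerivAt.comp_hasDerivAt s h1
  have h5 := ((inlCLM ℝ ℝ).hasFDerivAt.comp_hasDerivAt s h3).mul_const (ε : DualNumber ℝ)
  have h6 := h4.add h5
  have heq : (fun u => dualSin (θ u)) =
      fun u => (inl (Real.sin ((θ u).fst)) : DualNumber ℝ)
        + inl ((θ u).snd * Real.cos ((θ u).fst)) * ε := by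
    funext u; rfl
  rw [heq]
  refine h6.congr_deriv ?_
  unfold dualCos
  ext
  · simp only [inlCLM_apply, fst_add, fst_sub, fst_mul, fst_inl, DualNumber.fst_eps, mul_zero,
      add_zero, sub_zero, zero_mul]
    ring
  · simp only [inlCLM_apply, snd_add, snd_sub, DualNumber.snd_mul, snd_inl, fst_add, fst_sub,
      fst_mul, fst_inl, DualNumber.fst_eps, DualNumber.snd_eps, mul_zero, add_zero, sub_zero,
      zero_mul, zero_add, mul_one]
    ring

lemma hasDerivAt_dualCos_comp {θ : ℝ → DualNumber ℝ} {θ' : DualNumber ℝ} {s : ℝ}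
    (h : HasDerivAt θ θ' s) :
    HasDerivAt (fun u => dualCos (θ u)) (-(θ' * dualSin (θ s))) s := by
  have hfst : HasDerivAt (fun u => (θ u).fst) θ'.fst s :=
    (fstCLM ℝ ℝ).hasFDerivAt.comp_hasDerivAt s h
  have hsnd : HasDerivAt (fun u => (θ u).snd) θ'.snd s :=
    (sndCLM ℝ ℝ).hasFDerivAt.comp_hasDerivAt s h
  have h1 : HasDerivAt (fun u => Real.cos ((θ u).fst)) (-Real.sin ((θ s).fst) * θ'.fst) s :=
    (Real.hasDerivAt_cos _).comp s hfst
  have h2 : HasDerivAt (fun u => Real.sin ((θ u).fst)) (Real.cos ((θ s).fst) * θ'.fst) s :=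
    (Real.hasDerivAt_sin _).comp s hfst
  have h3 := hsnd.mul h2
  have h4 : HasDerivAt (fun u => (inl (Real.cos ((θ u).fst)) : DualNumber ℝ))
      (inl (-Real.sin ((θ s).fst) * θ'.fst)) s :=
    (inlCLM ℝ ℝ).hasFDerivAt.comp_hasDerivAt s h1
  have h5 := ((inlCLM ℝ ℝ).hasFDerivAt.comp_hasDerivAt s h3).mul_const (ε : DualNumber ℝ)
  have h6 := h4.sub h5
  have heq : (fun u => dualCos (θ u)) =
      fun u => (inl (Real.cos ((θ u).fst)) : DualNumber ℝ)
        - inl ((θ u).snd * Real.sin ((θ u).fst)) * ε := by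
    funext u; rfl
  rw [heq]
  refine h6.congr_deriv ?_
  unfold dualSin
  ext
  · simp only [inlCLM_apply, fst_neg, fst_add, fst_sub, fst_mul, fst_inl, DualNumber.fst_eps,
      mul_zero, add_zero, sub_zero, zero_mul]
    ring
  · simp only [inlCLM_apply, snd_neg, snd_add, snd_sub, DualNumber.snd_mul, snd_inl, fst_add,
      fst_sub, fst_mul, fst_inl, DualNumber.fst_eps, DualNumber.snd_eps, mul_zero, add_zero,
      sub_zero, zero_mul, zero_add, mul_one, neg_add, neg_mul]
    ring

lemma extract_coeffs (t n b : D3)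
    (htt : dualDot t t = 1) (hnn : dualDot n n = 1) (hbb : dualDot b b = 1)
    (htn : dualDot t n = 0) (htb : dualDot t b = 0) (hnb : dualDot n b = 0)
    (a₁ a₂ a₃ c₁ c₂ c₃ : DualNumber ℝ)
    (h : ∀ i, a₁ * t i + a₂ * n i + a₃ * b i = c₁ * t i + c₂ * n i + c₃ * b i) :
    a₁ = c₁ ∧ a₂ = c₂ ∧ a₃ = c₃ := by
  have key : ∀ w : D3, a₁ * dualDot t w + a₂ * dualDot n w + a₃ * dualDot b w
      = c₁ * dualDot t w + c₂ * dualDot n w + c₃ * dualDot b w := by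
    intro w
    have h0 : ∑ i, (a₁ * t i + a₂ * n i + a₃ * b i) * w i
        = ∑ i, (c₁ * t i + c₂ * n i + c₃ * b i) * w i :=
      Finset.sum_congr rfl fun i _ => by rw [h i]
    simpa [dualDot, add_mul, Finset.sum_add_distrib, Finset.mul_sum, mul_assoc] using h0
  have hnt : dualDot n t = dualDot t n := by simp [dualDot, mul_comm]
  have hbt : dualDot b t = dualDot t b := by simp [dualDot, mul_comm]
  have hbn : dualDot b n = dualDot n b := by simp [dualDot, mul_comm]
  refine ⟨?_, ?_, ?_⟩
  · have h1 := key t; rw [htt, hnt, htn, hbt, htb] at h1; simpa using h1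
  · have h1 := key n; rw [htn, hnn, hbn, hnb] at h1; simpa using h1
  · have h1 := key b; rw [htb, hnb, hbb] at h1; simpa using h1

/-- For a dual Mannheim pair with frames related by
`t̃₁ = cos θ̃ t̃ − sin θ̃ b̃`, `ñ₁ = sin θ̃ t̃ + cos θ̃ b̃` (and `ñ` parallel to
`b̃₁`): `κ̃₁ = −dθ̃/ds̃₁`, `τ̃₁ = (sin θ̃ κ̃ − cos θ̃ τ̃) ds̃/ds̃₁`,
`κ̃ = sin θ̃ τ̃₁ ds̃₁/ds̃` and `τ̃ = −cos θ̃ τ̃₁ ds̃₁/ds̃`. Both curves are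
parameterized by a common real parameter with dual speeds `σ = ds̃/ds`,
`σ₁ = ds̃₁/ds`, and the conclusions are written multiplicatively. -/
theorem dual_mannheim_frame_relations
    (α α₁ t n b t₁ n₁ b₁ : ℝ → D3)
    (κ τ κ₁ τ₁ σ σ₁ θ θ' : ℝ → DualNumber ℝ)
    (hα : ∀ s, HasDerivAt α (σ s • t s) s)
    (ht : ∀ s, HasDerivAt t (σ s • (κ s • n s)) s)
    (hn : ∀ s, HasDerivAt n (σ s • (-(κ s • t s) + τ s • b s)) s)
    (hb : ∀ s, HasDerivAt b (σ s • (-(τ s • n s))) s)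
    (hα₁ : ∀ s, HasDerivAt α₁ (σ₁ s • t₁ s) s)
    (ht₁ : ∀ s, HasDerivAt t₁ (σ₁ s • (κ₁ s • n₁ s)) s)
    (hn₁ : ∀ s, HasDerivAt n₁ (σ₁ s • (-(κ₁ s • t₁ s) + τ₁ s • b₁ s)) s)
    (hb₁ : ∀ s, HasDerivAt b₁ (σ₁ s • (-(τ₁ s • n₁ s))) s)
    (hθ : ∀ s, HasDerivAt θ (θ' s) s)
    (hnb₁ : ∀ s, n s = b₁ s)
    (hframe₁ : ∀ s, t₁ s = dualCos (θ s) • t s - dualSin (θ s) • b s)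
    (hframe₂ : ∀ s, n₁ s = dualSin (θ s) • t s + dualCos (θ s) • b s)
    (htunit : ∀ s, dualDot (t s) (t s) = 1)
    (hnunit : ∀ s, dualDot (n s) (n s) = 1)
    (hbunit : ∀ s, dualDot (b s) (b s) = 1)
    (htn : ∀ s, dualDot (t s) (n s) = 0)
    (htb : ∀ s, dualDot (t s) (b s) = 0)
    (hnb : ∀ s, dualDot (n s) (b s) = 0) :
    (∀ s, κ₁ s * σ₁ s = -θ' s) ∧
    (∀ s, τ₁ s * σ₁ s =
      (dualSin (θ s) * κ s - dualCos (θ s) * τ s) * σ s) ∧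
    (∀ s, κ s * σ s = dualSin (θ s) * τ₁ s * σ₁ s) ∧
    (∀ s, τ s * σ s = -(dualCos (θ s) * τ₁ s * σ₁ s)) := by
  have main : ∀ s, (κ₁ s * σ₁ s = -θ' s) ∧
      (τ₁ s * σ₁ s = (dualSin (θ s) * κ s - dualCos (θ s) * τ s) * σ s) ∧
      (κ s * σ s = dualSin (θ s) * τ₁ s * σ₁ s) ∧
      (τ s * σ s = -(dualCos (θ s) * τ₁ s * σ₁ s)) := by
    intro s
    have hDsin := hasDerivAt_dualSin_comp (hθ s)
    have hDcos := hasDerivAt_dualCos_comp (hθ s)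
    have ht' : ∀ i, HasDerivAt (fun u => t u i) ((σ s • (κ s • n s)) i) s :=
      fun i => hasDerivAt_pi.1 (ht s) i
    have hb' : ∀ i, HasDerivAt (fun u => b u i) ((σ s • (-(τ s • n s))) i) s :=
      fun i => hasDerivAt_pi.1 (hb s) i
    -- Equation from differentiating `t₁ = cos θ • t - sin θ • b`
    obtain ⟨eA1, _, eA3⟩ :=
      extract_coeffs (t s) (n s) (b s) (htunit s) (hnunit s) (hbunit s) (htn s) (htb s) (hnb s)
        (σ₁ s * κ₁ s * dualSin (θ s)) 0 (σ₁ s * κ₁ s * dualCos (θ s))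
        (-(θ' s * dualSin (θ s)))
        (dualCos (θ s) * (σ s * κ s) + dualSin (θ s) * (σ s * τ s))
        (-(θ' s * dualCos (θ s)))
        (fun i => by
          have hfun : (fun u => t₁ u i)
              = fun u => dualCos (θ u) * t u i - dualSin (θ u) * b u i := by
            funext u; rw [hframe₁ u]; simp [smul_eq_mul]
          have hcomb := (hDcos.mul (ht' i)).sub (hDsin.mul (hb' i))
          rw [show ((fun u => dualCos (θ u)) * fun u => t u i) - (fun u => dualSin (θ u)) * (fun u => b u i) = fun u => t₁ u i from hfun.symm] at hcomb
          have heq := (hasDerivAt_pi.1 (ht₁ s) i).unique hcomb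
          rw [hframe₂ s] at heq
          simp only [Pi.smul_apply, Pi.add_apply, Pi.neg_apply, smul_eq_mul] at heq
          linear_combination heq)
    -- Equation from differentiating `n₁ = sin θ • t + cos θ • b`
    obtain ⟨_, eB2, _⟩ :=
      extract_coeffs (t s) (n s) (b s) (htunit s) (hnunit s) (hbunit s) (htn s) (htb s) (hnb s)
        (-(σ₁ s * κ₁ s * dualCos (θ s))) (σ₁ s * τ₁ s) (σ₁ s * κ₁ s * dualSin (θ s))
        (θ' s * dualCos (θ s))
        (dualSin (θ s) * (σ s * κ s) - dualCos (θ s) * (σ s * τ s))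
        (-(θ' s * dualSin (θ s)))
        (fun i => by
          have hfun : (fun u => n₁ u i)
              = fun u => dualSin (θ u) * t u i + dualCos (θ u) * b u i := by
            funext u; rw [hframe₂ u]; simp [smul_eq_mul]
          have hcomb := (hDsin.mul (ht' i)).add (hDcos.mul (hb' i))
          rw [show ((fun u => dualSin (θ u)) * fun u => t u i) + (fun u => dualCos (θ u)) * (fun u => b u i) = fun u => n₁ u i from hfun.symm] at hcomb
          have heq := (hasDerivAt_pi.1 (hn₁ s) i).unique hcomb
          rw [hframe₁ s, ← hnb₁ s] at heq
          simp only [Pi.smul_apply, Pi.add_apply, Pi.sub_apply, Pi.neg_apply,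
            smul_eq_mul] at heq
          linear_combination heq)
    -- Equation from differentiating `n = b₁`
    obtain ⟨eC1, _, eC3⟩ :=
      extract_coeffs (t s) (n s) (b s) (htunit s) (hnunit s) (hbunit s) (htn s) (htb s) (hnb s)
        (-(σ s * κ s)) 0 (σ s * τ s)
        (-(σ₁ s * τ₁ s * dualSin (θ s))) 0 (-(σ₁ s * τ₁ s * dualCos (θ s)))
        (fun i => by
          have hnfun : n = b₁ := funext hnb₁
          have hC := hb₁ s
          rw [← hnfun] at hC
          have heq := congrFun ((hn s).unique hC) i
          rw [hframe₂ s] at heq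
          simp only [Pi.smul_apply, Pi.add_apply, Pi.neg_apply, smul_eq_mul] at heq
          linear_combination heq)
    refine ⟨?_, ?_, ?_, ?_⟩
    · linear_combination dualSin (θ s) * eA1 + dualCos (θ s) * eA3
        - (κ₁ s * σ₁ s + θ' s) * dualSin_sq_add_dualCos_sq (θ s)
    · linear_combination eB2
    · linear_combination -eC1
    · linear_combination eC3
  exact ⟨fun s => (main s).1, fun s => (main s).2.1, fun s => (main s).2.2.1,
    fun s => (main s).2.2.2⟩
end
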